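/- arXiv:2112.09250 — 2 statements merged into one kernel-verified Lean document; each statement's English description precedes it below -/
import Mathlib

section
/- Let D ⊆ E admit a d-flow and let e ∈ E. Then A(D) = A(D + e) or A(D) = A(D − e); that is, either the unique min-cost d-flow on D ∪ {e, rev e} coincides with A(D), or D ∖ {e, rev e} admits a d-flow and its unique min-cost d-flow coincides with A(D). -/
open Finset

section Defs

variable {V : Type*}

/-- Reversal of a directed edge. -/
def drev (e : V × V) : V × V := (e.2, e.1)

/-- `K` is a subgraph of the (symmetric) edge set `E`: it contains either both or
neither of `e` and `drev e` for every `e ∈ E`. -/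
def IsSubgraph [DecidableEq V] (E K : Finset (V × V)) : Prop :=
  K ⊆ E ∧ ∀ e ∈ E, (e ∈ K ↔ drev e ∈ K)

/-- `L` is an orientation of the (symmetric) edge set `E`: it contains exactly one of
`e` and `drev e` for every `e ∈ E`. -/
def IsOrientation [DecidableEq V] (E L : Finset (V × V)) : Prop :=
  L ⊆ E ∧ ∀ e ∈ E, (e ∈ L ↔ drev e ∉ L)

variable [Fintype V] [DecidableEq V]

/-- `f` is a `d`-flow on the directed subgraph `D` of the graph with edge set `E`. -/
def IsFlow (E D : Finset (V × V)) (d : V → ℤ) (f : V × V → ℝ) : Prop :=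
  (∀ e ∈ E, 0 ≤ f e ∧ f e ≤ 1) ∧
  (∀ e, e ∉ D → f e = 0) ∧
  ∀ u : V,
    ((Finset.univ.filter (fun v : V => (u, v) ∈ E)).sum fun v => f (u, v)) -
      ((Finset.univ.filter (fun v : V => (v, u) ∈ E)).sum fun v => f (v, u)) = (d u : ℝ)

/-- A `d`-flow exists on `D`. -/
def AdmitsFlow (E D : Finset (V × V)) (d : V → ℤ) : Prop :=
  ∃ f : V × V → ℝ, IsFlow E D d f

/-- The `w`-cost of a flow `f`. -/
def flowCost (E : Finset (V × V)) (w : V × V → ℝ) (f : V × V → ℝ) : ℝ :=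
  ∑ e ∈ E, w e * f e

/-- `f` is a min-cost `d`-flow on `D`. -/
def IsMinCostFlow (E D : Finset (V × V)) (d : V → ℤ) (w : V × V → ℝ)
    (f : V × V → ℝ) : Prop :=
  IsFlow E D d f ∧ ∀ g : V × V → ℝ, IsFlow E D d g → flowCost E w f ≤ flowCost E w g

/-- The `{0,1}`-valued function determined by a set of edges. -/
def ind (S : Finset (V × V)) : V × V → ℝ := fun e => if e ∈ S then 1 else 0

/-- `A` assigns to every flow-admitting `D ⊆ E` the (edge set of the) unique,
`{0,1}`-valued min-cost `d`-flow on `D`. -/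
def GoodA (E : Finset (V × V)) (d : V → ℤ) (w : V × V → ℝ)
    (A : Finset (V × V) → Finset (V × V)) : Prop :=
  ∀ D : Finset (V × V), D ⊆ E → AdmitsFlow E D d →
    IsMinCostFlow E D d w (ind (A D)) ∧
    ∀ f : V × V → ℝ, IsMinCostFlow E D d w f → f = ind (A D)

/-- `A(D) = A(D')`: both `D` and `D'` admit a `d`-flow and their unique min-cost
`d`-flows coincide.  (If one of them admits no `d`-flow this is false.) -/
def AEq (E : Finset (V × V)) (d : V → ℤ) (A : Finset (V × V) → Finset (V × V))
    (D D' : Finset (V × V)) : Prop :=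
  AdmitsFlow E D d ∧ AdmitsFlow E D' d ∧ A D = A D'

/-- `D ⊕ e := (D ∪ {e}) \ {drev e}`. -/
def oplus (D : Finset (V × V)) (e : V × V) : Finset (V × V) := insert e D \ {drev e}

/-- `D + e := D ∪ {e, drev e}`. -/
def padd (D : Finset (V × V)) (e : V × V) : Finset (V × V) := D ∪ {e, drev e}

/-- `D − e := D \ {e, drev e}`. -/
def psub (D : Finset (V × V)) (e : V × V) : Finset (V × V) := D \ {e, drev e}

/-- The representative of `{e, drev e}` lying in the reference orientation `E'`. -/
def chi (E' : Finset (V × V)) (e : V × V) : V × V := if e ∈ E' then e else drev e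

/-- The map `φ_e`. -/
noncomputable def phiE (E : Finset (V × V)) (d : V → ℤ)
    (A : Finset (V × V) → Finset (V × V)) (E' : Finset (V × V))
    (e : V × V) (D : Finset (V × V)) : Finset (V × V) := by
  classical
  exact
    if ¬ AEq E d A D (oplus D e) then oplus D (drev e)
    else if ¬ AEq E d A D (oplus D (drev e)) then oplus D e
    else if e ∈ D then oplus D (chi E' e) else oplus D (drev (chi E' e))

/-- The map `ψ_e`. -/
noncomputable def psiE (E : Finset (V × V)) (d : V → ℤ)
    (A : Finset (V × V) → Finset (V × V)) (E' : Finset (V × V))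
    (e : V × V) (D : Finset (V × V)) : Finset (V × V) := by
  classical
  exact
    if ¬ AEq E d A D (padd D e) then psub D e
    else if ¬ AEq E d A D (psub D e) then padd D e
    else if chi E' e ∈ D then padd D e else psub D e

end Defs
section Aux
variable {V : Type*} [Fintype V] [DecidableEq V]

def divg (E : Finset (V × V)) (f : V × V → ℝ) (u : V) : ℝ :=
  ((Finset.univ.filter (fun v : V => (u, v) ∈ E)).sum fun v => f (u, v)) -
    ((Finset.univ.filter (fun v : V => (v, u) ∈ E)).sum fun v => f (v, u))

lemma divg_sub (E : Finset (V × V)) (f g : V × V → ℝ) (u : V) :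
    divg E (fun a => f a - g a) u = divg E f u - divg E g u := by
  simp only [divg, Finset.sum_sub_distrib]; ring

lemma divg_add (E : Finset (V × V)) (f g : V × V → ℝ) (u : V) :
    divg E (fun a => f a + g a) u = divg E f u + divg E g u := by
  simp only [divg, Finset.sum_add_distrib]; ring

lemma divg_smul (E : Finset (V × V)) (s : ℝ) (f : V × V → ℝ) (u : V) :
    divg E (fun a => s * f a) u = s * divg E f u := by
  simp only [divg, ← Finset.mul_sum]; ring

lemma sum_ite_out (E : Finset (V × V)) (c : V × V) (hc : c ∈ E) (t : ℝ) (u : V) :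
    (∑ v ∈ univ.filter (fun v : V => (u, v) ∈ E), (if (u, v) = c then t else 0))
      = if u = c.1 then t else 0 := by
  by_cases hu : u = c.1
  · subst hu
    rw [if_pos rfl, Finset.sum_eq_single c.2]
    · simp
    · intro v _ hv; rw [if_neg]; intro h; exact hv (congrArg Prod.snd h)
    · intro h; exfalso; apply h; simpa using hc
  · rw [if_neg hu]
    apply Finset.sum_eq_zero
    intro v _; rw [if_neg]; intro h; exact hu (congrArg Prod.fst h)

lemma sum_ite_in (E : Finset (V × V)) (c : V × V) (hc : c ∈ E) (t : ℝ) (u : V) :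
    (∑ v ∈ univ.filter (fun v : V => (v, u) ∈ E), (if (v, u) = c then t else 0))
      = if u = c.2 then t else 0 := by
  by_cases hu : u = c.2
  · subst hu
    rw [if_pos rfl, Finset.sum_eq_single c.1]
    · simp
    · intro v _ hv; rw [if_neg]; intro h; exact hv (congrArg Prod.fst h)
    · intro h; exfalso; apply h; simpa using hc
  · rw [if_neg hu]
    apply Finset.sum_eq_zero
    intro v _; rw [if_neg]; intro h; exact hu (congrArg Prod.snd h)

lemma divg_ite (E : Finset (V × V)) (c : V × V) (hc : c ∈ E) (t : ℝ) (u : V) :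
    divg E (fun a => if a = c then t else 0) u
      = (if u = c.1 then t else 0) - (if u = c.2 then t else 0) := by
  unfold divg
  rw [sum_ite_out E c hc t u, sum_ite_in E c hc t u]

lemma divg_combo (E : Finset (V × V)) (e : V × V) (he : e ∈ E) (hre : drev e ∈ E)
    (s t c : ℝ) (f g : V × V → ℝ) (u : V) :
    divg E (fun a => s * f a + t * g a - (if a = e then c else 0)
      - (if a = drev e then c else 0)) u = s * divg E f u + t * divg E g u := by
  rw [divg_sub E _ (fun a => if a = drev e then c else 0),
    divg_sub E (fun a => s * f a + t * g a) (fun a => if a = e then c else 0),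
    divg_add E (fun a => s * f a) (fun a => t * g a), divg_smul, divg_smul,
    divg_ite E e he, divg_ite E (drev e) hre]
  have h1 : (drev e).1 = e.2 := rfl
  have h2 : (drev e).2 = e.1 := rfl
  rw [h1, h2]; ring

lemma cost_combo (E : Finset (V × V)) (w : V × V → ℝ) (e : V × V)
    (he : e ∈ E) (hre : drev e ∈ E)
    (s t c : ℝ) (f g : V × V → ℝ) :
    flowCost E w (fun a => s * f a + t * g a - (if a = e then c else 0)
      - (if a = drev e then c else 0))
      = s * flowCost E w f + t * flowCost E w g - c * w e - c * w (drev e) := by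
  unfold flowCost
  simp only [mul_sub, mul_add, mul_ite, mul_zero, Finset.sum_sub_distrib,
    Finset.sum_add_distrib, Finset.sum_ite_eq', he, hre, if_pos, ← Finset.mul_sum]
  ring_nf
  have h1 : ∑ x ∈ E, w x * s * f x = s * ∑ x ∈ E, w x * f x := by
    rw [Finset.mul_sum]; exact Finset.sum_congr rfl fun x _ => by ring
  have h2 : ∑ x ∈ E, w x * t * g x = t * ∑ x ∈ E, w x * g x := by
    rw [Finset.mul_sum]; exact Finset.sum_congr rfl fun x _ => by ring
  rw [h1, h2]

end Aux

section Aux2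
variable {V : Type*} [Fintype V] [DecidableEq V]

set_option linter.unusedSectionVars false

lemma isFlow_divg (E D : Finset (V × V)) (d : V → ℤ) (f : V × V → ℝ)
    (h1 : ∀ e ∈ E, 0 ≤ f e ∧ f e ≤ 1) (h2 : ∀ e, e ∉ D → f e = 0)
    (h3 : ∀ u, divg E f u = (d u : ℝ)) : IsFlow E D d f :=
  ⟨h1, h2, h3⟩

lemma isFlow_divg' (E D : Finset (V × V)) (d : V → ℤ) (f : V × V → ℝ)
    (h : IsFlow E D d f) : ∀ u, divg E f u = (d u : ℝ) := h.2.2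

lemma ind_eq_one {S : Finset (V × V)} {a : V × V} (h : a ∈ S) : ind S a = 1 := by
  simp [ind, h]

lemma ind_eq_zero {S : Finset (V × V)} {a : V × V} (h : a ∉ S) : ind S a = 0 := by
  simp [ind, h]

lemma ind_inj {S T : Finset (V × V)} (h : ind S = ind T) : S = T := by
  ext a
  have := congrFun h a
  by_cases hS : a ∈ S <;> by_cases hT : a ∈ T <;>
    simp [ind, hS, hT] at this ⊢

lemma flow_mono {E D D' : Finset (V × V)} {d : V → ℤ} {f : V × V → ℝ}
    (h : IsFlow E D d f) (hsub : D ⊆ D') : IsFlow E D' d f :=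
  ⟨h.1, fun a ha => h.2.1 a (fun h' => ha (hsub h')), h.2.2⟩

lemma subset_of_ind_flow {E D : Finset (V × V)} {d : V → ℤ} {S : Finset (V × V)}
    (h : IsFlow E D d (ind S)) : S ⊆ D := by
  intro a ha
  by_contra hC
  have := h.2.1 a hC
  rw [ind_eq_one ha] at this
  norm_num at this

lemma mem_padd {D : Finset (V × V)} {e a : V × V} :
    a ∈ padd D e ↔ a ∈ D ∨ a = e ∨ a = drev e := by
  simp [padd]; tauto

lemma main_contra (E D : Finset (V × V)) (d : V → ℤ) (w : V × V → ℝ)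
    (e : V × V) (he : e ∈ E) (hre : drev e ∈ E) (hene : e ≠ drev e)
    (hwe : 0 < w e) (hwre : 0 < w (drev e))
    (F G : V × V → ℝ)
    (hFmin : IsMinCostFlow E D d w F)
    (hGflow : IsFlow E (padd D e) d G)
    (hsum_e : F e + G e = 1) (hsum_re : F (drev e) + G (drev e) = 1)
    (hclt : flowCost E w G < flowCost E w F) : False := by
  have hrene : drev e ≠ e := fun h => hene h.symm
  set H : V × V → ℝ := fun a => (1/2 : ℝ) * F a + (1/2 : ℝ) * G a -
    (if a = e then (1/2 : ℝ) else 0) - (if a = drev e then (1/2 : ℝ) else 0) with hH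
  have hHe : H e = 0 := by
    simp only [hH, if_neg hene, if_pos rfl, if_true, eq_self_iff_true]
    linarith
  have hHre : H (drev e) = 0 := by
    simp only [hH, if_neg hrene, if_pos rfl, if_true, eq_self_iff_true]
    linarith
  have hHflow : IsFlow E D d H := by
    refine isFlow_divg E D d H ?_ ?_ ?_
    · intro a ha
      by_cases h1 : a = e
      · subst h1; rw [hHe]; norm_num
      · by_cases h2 : a = drev e
        · subst h2; rw [hHre]; norm_num
        · have hF := hFmin.1.1 a ha
          have hG := hGflow.1 a ha
          simp only [hH, if_neg h1, if_neg h2]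
          constructor <;> linarith [hF.1, hF.2, hG.1, hG.2]
    · intro a ha
      by_cases h1 : a = e
      · subst h1; exact hHe
      · by_cases h2 : a = drev e
        · subst h2; exact hHre
        · have hF := hFmin.1.2.1 a ha
          have hG : G a = 0 := by
            apply hGflow.2.1
            rw [mem_padd]
            push_neg
            exact ⟨ha, h1, h2⟩
          simp only [hH, if_neg h1, if_neg h2, hF, hG]; ring
    · intro u
      rw [hH, divg_combo E e he hre, isFlow_divg' E D d F hFmin.1 u,
        isFlow_divg' E (padd D e) d G hGflow u]
      ring
  have hc := hFmin.2 H hHflow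
  rw [hH, cost_combo E w e he hre] at hc
  linarith

end Aux2

theorem minCostFlow_padd_or_psub
    {V : Type*} [Fintype V] [DecidableEq V]
    (E : Finset (V × V)) (hE_symm : ∀ e, e ∈ E ↔ drev e ∈ E)
    (hE_ne : ∀ e ∈ E, e.1 ≠ e.2)
    (d : V → ℤ) (hd : ∑ u : V, d u = 0)
    (w : V × V → ℝ) (hw : ∀ e ∈ E, 0 < w e)
    (A : Finset (V × V) → Finset (V × V)) (hA : GoodA E d w A)
    (D : Finset (V × V)) (hD : D ⊆ E) (hDf : AdmitsFlow E D d)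
    (e : V × V) (he : e ∈ E) :
    AEq E d A D (padd D e) ∨ AEq E d A D (psub D e) := by
  classical
  obtain ⟨hFmin, hFuniq⟩ := hA D hD hDf
  have hre : drev e ∈ E := (hE_symm e).mp he
  have hene : e ≠ drev e := fun h => hE_ne e he (congrArg Prod.fst h)
  have hrene : drev e ≠ e := fun h => hene h.symm
  have hwe := hw e he
  have hwre := hw (drev e) hre
  have hpaddE : padd D e ⊆ E := by
    intro a ha
    rcases mem_padd.mp ha with h | h | h
    · exact hD h
    · exact h ▸ he
    · exact h ▸ hre
  have hDp : D ⊆ padd D e := Finset.subset_union_left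
  have hFflow := hFmin.1
  have hFpadd : IsFlow E (padd D e) d (ind (A D)) := flow_mono hFflow hDp
  have hadm : AdmitsFlow E (padd D e) d := ⟨_, hFpadd⟩
  obtain ⟨hGmin, hGuniq⟩ := hA (padd D e) hpaddE hadm
  have hGflow := hGmin.1
  have hADsub : A D ⊆ D := subset_of_ind_flow hFflow
  have hAGsub : A (padd D e) ⊆ padd D e := subset_of_ind_flow hGflow
  have hcGF : flowCost E w (ind (A (padd D e))) ≤ flowCost E w (ind (A D)) :=
    hGmin.2 _ hFpadd
  -- the min-cost flow on `padd D e` cannot use both `e` and `drev e`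
  have hnotboth : ¬ (e ∈ A (padd D e) ∧ drev e ∈ A (padd D e)) := by
    rintro ⟨h1, h2⟩
    set G' : V × V → ℝ := fun a => (1 : ℝ) * ind (A (padd D e)) a +
      (0 : ℝ) * ind (A (padd D e)) a - (if a = e then (1 : ℝ) else 0) -
      (if a = drev e then (1 : ℝ) else 0) with hG'
    have hG'e : G' e = 0 := by
      simp only [hG', if_neg hene, if_pos rfl, if_true, eq_self_iff_true]
      rw [ind_eq_one h1]; ring
    have hG're : G' (drev e) = 0 := by
      simp only [hG', if_neg hrene, if_pos rfl, if_true, eq_self_iff_true]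
      rw [ind_eq_one h2]; ring
    have hflow' : IsFlow E (padd D e) d G' := by
      refine isFlow_divg E (padd D e) d G' ?_ ?_ ?_
      · intro a ha
        by_cases hae : a = e
        · subst hae; rw [hG'e]; norm_num
        · by_cases har : a = drev e
          · subst har; rw [hG're]; norm_num
          · have hG := hGflow.1 a ha
            simp only [hG', if_neg hae, if_neg har]
            constructor <;> linarith [hG.1, hG.2]
      · intro a ha
        have hae : a ≠ e := fun h => ha (h ▸ mem_padd.mpr (Or.inr (Or.inl rfl)))
        have har : a ≠ drev e := fun h => ha (h ▸ mem_padd.mpr (Or.inr (Or.inr rfl)))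
        have hG := hGflow.2.1 a ha
        simp only [hG', if_neg hae, if_neg har, hG]; ring
      · intro u
        rw [hG', divg_combo E e he hre,
          isFlow_divg' E (padd D e) d _ hGflow u]
        ring
    have hc := hGmin.2 G' hflow'
    rw [hG', cost_combo E w e he hre] at hc
    linarith
  by_cases hGD : A (padd D e) ⊆ D
  · -- the min-cost flow on `padd D e` is supported in `D`
    left
    have hGDflow : IsFlow E D d (ind (A (padd D e))) := by
      refine ⟨hGflow.1, fun a ha => ?_, hGflow.2.2⟩
      exact ind_eq_zero (fun h => ha (hGD h))
    have hGminD : IsMinCostFlow E D d w (ind (A (padd D e))) :=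
      ⟨hGDflow, fun g hg => le_trans hcGF (hFmin.2 g hg)⟩
    have hEq := ind_inj (hFuniq _ hGminD)
    exact ⟨hDf, hadm, hEq.symm⟩
  · obtain ⟨x, hxA, hxD⟩ := Finset.not_subset.mp hGD
    have hxmem : x = e ∨ x = drev e := by
      rcases mem_padd.mp (hAGsub hxA) with h | h | h
      · exact absurd h hxD
      · exact Or.inl h
      · exact Or.inr h
    have hclt : flowCost E w (ind (A (padd D e))) < flowCost E w (ind (A D)) := by
      rcases lt_or_eq_of_le hcGF with h | h
      · exact h
      · exfalso
        have hFminp : IsMinCostFlow E (padd D e) d w (ind (A D)) :=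
          ⟨hFpadd, fun g hg => h ▸ hGmin.2 g hg⟩
        have heq := hGuniq _ hFminp
        have hx0 : ind (A D) x = 0 := ind_eq_zero (fun h' => hxD (hADsub h'))
        have hx1 : ind (A (padd D e)) x = 1 := ind_eq_one hxA
        rw [heq, hx1] at hx0
        norm_num at hx0
    have hkey : e ∉ A D ∧ drev e ∉ A D := by
      rcases hxmem with rfl | hx
      · refine ⟨fun h => hxD (hADsub h), fun h => ?_⟩
        exfalso
        refine main_contra E D d w x he hre hene hwe hwre
          (ind (A D)) (ind (A (padd D x))) hFmin hGflow ?_ ?_ hclt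
        · rw [ind_eq_zero (fun h' => hxD (hADsub h')), ind_eq_one hxA]; ring
        · rw [ind_eq_one h, ind_eq_zero (fun h' => hnotboth ⟨hxA, h'⟩)]; ring
      · subst hx
        refine ⟨fun h => ?_, fun h => hxD (hADsub h)⟩
        exfalso
        refine main_contra E D d w e he hre hene hwe hwre
          (ind (A D)) (ind (A (padd D e))) hFmin hGflow ?_ ?_ hclt
        · rw [ind_eq_one h, ind_eq_zero (fun h' => hnotboth ⟨h', hxA⟩)]; ring
        · rw [ind_eq_zero (fun h' => hxD (hADsub h')), ind_eq_one hxA]; ring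
    right
    have hpsubD : psub D e ⊆ D := Finset.sdiff_subset
    have hFpsub : IsFlow E (psub D e) d (ind (A D)) := by
      refine ⟨hFflow.1, fun a ha => ?_, hFflow.2.2⟩
      by_cases haD : a ∈ D
      · have : a = e ∨ a = drev e := by
          by_contra hC
          push_neg at hC
          exact ha (by simp [psub, haD, hC.1, hC.2])
        rcases this with rfl | rfl
        · exact ind_eq_zero hkey.1
        · exact ind_eq_zero hkey.2
      · exact hFflow.2.1 a haD
    have hadm2 : AdmitsFlow E (psub D e) d := ⟨_, hFpsub⟩
    obtain ⟨hPmin, hPuniq⟩ := hA (psub D e) (hpsubD.trans hD) hadm2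
    have hFminP : IsMinCostFlow E (psub D e) d w (ind (A D)) :=
      ⟨hFpsub, fun g hg => hFmin.2 g (flow_mono hg hpsubD)⟩
    exact ⟨hDf, hadm2, ind_inj (hPuniq _ hFminP)⟩
end

section
/- For every D ⊆ E admitting a d-flow and every e ∈ E: the first two defining cases of φ_e are mutually exclusive (so φ_e is well defined); φ_e(D) admits a d-flow with A(φ_e(D)) = A(D); φ_e(D) contains exactly one of e and rev e; and φ_e(D) ∖ {e, rev e} = D ∖ {e, rev e}. -/
open Finset

section Aux

variable {V : Type*} [Fintype V] [DecidableEq V]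

lemma drev_drev (e : V × V) : drev (drev e) = e := rfl

lemma drev_ne {e : V × V} (h : e.1 ≠ e.2) : e ≠ drev e := by
  intro hh
  exact h (congrArg Prod.fst hh)

lemma A_subset {E : Finset (V × V)} {d : V → ℤ} {w : V × V → ℝ}
    {A : Finset (V × V) → Finset (V × V)} (hA : GoodA E d w A)
    {X : Finset (V × V)} (hX : X ⊆ E) (hXf : AdmitsFlow E X d) : A X ⊆ X := by
  intro x hx
  by_contra hxX
  have h0 := (hA X hX hXf).1.1.2.1 x hxX
  simp [ind, hx] at h0

lemma sum_if_out (E : Finset (V × V)) {a : V × V} (ha : a ∈ E) (u : V) (c : ℝ) :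
    ((Finset.univ.filter (fun v : V => (u, v) ∈ E)).sum fun v =>
      if ((u, v) : V × V) = a then c else 0) = if u = a.1 then c else 0 := by
  by_cases h : u = a.1
  · rw [if_pos h]
    have hcong : ∀ v : V, (if ((u, v) : V × V) = a then c else 0) = (if v = a.2 then c else 0) := by
      intro v
      refine if_congr ?_ rfl rfl
      rw [Prod.ext_iff]
      simp [h]
    rw [Finset.sum_congr rfl (fun v _ => hcong v), Finset.sum_ite_eq']
    rw [if_pos]
    simp only [Finset.mem_filter, Finset.mem_univ, true_and]
    have heq : ((u, a.2) : V × V) = a := Prod.ext h rfl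
    rw [heq]; exact ha
  · rw [if_neg h]
    refine Finset.sum_eq_zero fun v _ => ?_
    rw [if_neg]
    intro hh; exact h (congrArg Prod.fst hh)

lemma sum_if_in (E : Finset (V × V)) {a : V × V} (ha : a ∈ E) (u : V) (c : ℝ) :
    ((Finset.univ.filter (fun v : V => (v, u) ∈ E)).sum fun v =>
      if ((v, u) : V × V) = a then c else 0) = if u = a.2 then c else 0 := by
  by_cases h : u = a.2
  · rw [if_pos h]
    have hcong : ∀ v : V, (if ((v, u) : V × V) = a then c else 0) = (if v = a.1 then c else 0) := by
      intro v
      refine if_congr ?_ rfl rfl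
      rw [Prod.ext_iff]
      simp [h]
    rw [Finset.sum_congr rfl (fun v _ => hcong v), Finset.sum_ite_eq']
    rw [if_pos]
    simp only [Finset.mem_filter, Finset.mem_univ, true_and]
    have heq : ((a.1, u) : V × V) = a := Prod.ext rfl h
    rw [heq]; exact ha
  · rw [if_neg h]
    refine Finset.sum_eq_zero fun v _ => ?_
    rw [if_neg]
    intro hh; exact h (congrArg Prod.snd hh)

lemma if_shift_eq {e x : V × V} (hed : e ≠ drev e) (h : V × V → ℝ) (c : ℝ) :
    (if x = e ∨ x = drev e then h x - c else h x)
      = h x - ((if x = e then c else 0) + (if x = drev e then c else 0)) := by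
  by_cases h1 : x = e
  · subst h1
    rw [if_pos (Or.inl rfl), if_pos rfl, if_neg (fun hh => hed hh)]
    ring
  · by_cases h2 : x = drev e
    · subst h2
      rw [if_pos (Or.inr rfl), if_neg h1, if_pos rfl]
      ring
    · rw [if_neg (by tauto), if_neg h1, if_neg h2]
      ring

lemma div_shift (E : Finset (V × V)) {e : V × V} (he : e ∈ E) (hre : drev e ∈ E)
    (hne : e.1 ≠ e.2) (h : V × V → ℝ) (c : ℝ) (u : V) :
    ((Finset.univ.filter (fun v : V => (u, v) ∈ E)).sum fun v =>
        if ((u, v) : V × V) = e ∨ ((u, v) : V × V) = drev e then h (u, v) - c else h (u, v)) -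
      ((Finset.univ.filter (fun v : V => (v, u) ∈ E)).sum fun v =>
        if ((v, u) : V × V) = e ∨ ((v, u) : V × V) = drev e then h (v, u) - c else h (v, u)) =
    ((Finset.univ.filter (fun v : V => (u, v) ∈ E)).sum fun v => h (u, v)) -
      ((Finset.univ.filter (fun v : V => (v, u) ∈ E)).sum fun v => h (v, u)) := by
  have hed : e ≠ drev e := drev_ne hne
  have hrw1 : ((Finset.univ.filter (fun v : V => (u, v) ∈ E)).sum fun v =>
        if ((u, v) : V × V) = e ∨ ((u, v) : V × V) = drev e then h (u, v) - c else h (u, v))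
      = ((Finset.univ.filter (fun v : V => (u, v) ∈ E)).sum fun v => h (u, v))
        - (((Finset.univ.filter (fun v : V => (u, v) ∈ E)).sum fun v =>
             if ((u, v) : V × V) = e then c else 0)
          + ((Finset.univ.filter (fun v : V => (u, v) ∈ E)).sum fun v =>
             if ((u, v) : V × V) = drev e then c else 0)) := by
    rw [← Finset.sum_add_distrib, ← Finset.sum_sub_distrib]
    exact Finset.sum_congr rfl fun v _ => if_shift_eq hed h c
  have hrw2 : ((Finset.univ.filter (fun v : V => (v, u) ∈ E)).sum fun v =>
        if ((v, u) : V × V) = e ∨ ((v, u) : V × V) = drev e then h (v, u) - c else h (v, u))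
      = ((Finset.univ.filter (fun v : V => (v, u) ∈ E)).sum fun v => h (v, u))
        - (((Finset.univ.filter (fun v : V => (v, u) ∈ E)).sum fun v =>
             if ((v, u) : V × V) = e then c else 0)
          + ((Finset.univ.filter (fun v : V => (v, u) ∈ E)).sum fun v =>
             if ((v, u) : V × V) = drev e then c else 0)) := by
    rw [← Finset.sum_add_distrib, ← Finset.sum_sub_distrib]
    exact Finset.sum_congr rfl fun v _ => if_shift_eq hed h c
  rw [hrw1, hrw2, sum_if_out E he, sum_if_out E hre, sum_if_in E he, sum_if_in E hre]
  have h1 : (drev e).1 = e.2 := rfl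
  have h2 : (drev e).2 = e.1 := rfl
  rw [h1, h2]
  ring

lemma shift_flow {E D : Finset (V × V)} {d : V → ℤ} {h : V × V → ℝ} {e : V × V}
    (he : e ∈ E) (hre : drev e ∈ E) (hne : e.1 ≠ e.2) {c : ℝ}
    (hcons : ∀ u : V, ((Finset.univ.filter (fun v : V => (u, v) ∈ E)).sum fun v => h (u, v)) -
      ((Finset.univ.filter (fun v : V => (v, u) ∈ E)).sum fun v => h (v, u)) = (d u : ℝ))
    (hb : ∀ x ∈ E, 0 ≤ (if x = e ∨ x = drev e then h x - c else h x) ∧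
        (if x = e ∨ x = drev e then h x - c else h x) ≤ 1)
    (hsupp : ∀ x, x ∉ D → (if x = e ∨ x = drev e then h x - c else h x) = 0) :
    IsFlow E D d (fun x => if x = e ∨ x = drev e then h x - c else h x) :=
  ⟨hb, hsupp, fun u => (div_shift E he hre hne h c u).trans (hcons u)⟩

lemma cost_shift (E : Finset (V × V)) (w : V × V → ℝ) {e : V × V} (he : e ∈ E)
    (hre : drev e ∈ E) (hed : e ≠ drev e) (h : V × V → ℝ) (c : ℝ) :
    flowCost E w (fun x => if x = e ∨ x = drev e then h x - c else h x)
      = flowCost E w h - c * (w e + w (drev e)) := by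
  unfold flowCost
  have hrw : ∀ x ∈ E, w x * (if x = e ∨ x = drev e then h x - c else h x)
      = w x * h x - ((if x = e then c * w x else 0) + (if x = drev e then c * w x else 0)) := by
    intro x _
    by_cases h1 : x = e
    · subst h1
      rw [if_pos (Or.inl rfl), if_pos rfl, if_neg (fun hh => hed hh)]
      ring
    · by_cases h2 : x = drev e
      · subst h2
        rw [if_pos (Or.inr rfl), if_neg h1, if_pos rfl]
        ring
      · rw [if_neg (fun hh => hh.elim h1 h2), if_neg h1, if_neg h2]
        ring
  rw [Finset.sum_congr rfl hrw, Finset.sum_sub_distrib, Finset.sum_add_distrib,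
    Finset.sum_ite_eq' E e (fun x => c * w x), Finset.sum_ite_eq' E (drev e) (fun x => c * w x),
    if_pos he, if_pos hre]
  ring

lemma aeq_oplus_of_mem {E D : Finset (V × V)} {d : V → ℤ} {w : V × V → ℝ}
    {A : Finset (V × V) → Finset (V × V)} (hA : GoodA E d w A)
    (hD : D ⊆ E) (hDf : AdmitsFlow E D d) {e : V × V} (he : e ∈ E)
    (h1 : e ∈ A D) (h2 : drev e ∉ A D) : AEq E d A D (oplus D e) := by
  obtain ⟨hmin, huniq⟩ := hA D hD hDf
  have hADD : A D ⊆ D := A_subset hA hD hDf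
  have hsubD : oplus D e ⊆ D := by
    intro x hx
    rcases Finset.mem_insert.mp (Finset.mem_sdiff.mp hx).1 with rfl | hxD
    exacts [hADD h1, hxD]
  have hsubE : oplus D e ⊆ E := hsubD.trans hD
  have hflow : IsFlow E (oplus D e) d (ind (A D)) := by
    refine ⟨hmin.1.1, ?_, hmin.1.2.2⟩
    intro x hx
    have hxA : x ∉ A D := by
      intro hxA
      apply hx
      rw [oplus, Finset.mem_sdiff, Finset.mem_insert, Finset.mem_singleton]
      refine ⟨Or.inr (hADD hxA), ?_⟩
      rintro rfl; exact h2 hxA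
    simp [ind, hxA]
  have hminD' : IsMinCostFlow E (oplus D e) d w (ind (A D)) := by
    refine ⟨hflow, fun g hg => hmin.2 g ?_⟩
    exact ⟨hg.1, fun x hx => hg.2.1 x (fun hh => hx (hsubD hh)), hg.2.2⟩
  have hadm : AdmitsFlow E (oplus D e) d := ⟨_, hflow⟩
  exact ⟨hDf, hadm, ind_inj ((hA _ hsubE hadm).2 _ hminD')⟩

end Aux


theorem phiE_well_defined
    {V : Type*} [Fintype V] [DecidableEq V]
    (E : Finset (V × V)) (hE_symm : ∀ e, e ∈ E ↔ drev e ∈ E)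
    (hE_ne : ∀ e ∈ E, e.1 ≠ e.2)
    (d : V → ℤ) (hd : ∑ u : V, d u = 0)
    (w : V × V → ℝ) (hw : ∀ e ∈ E, 0 < w e)
    (A : Finset (V × V) → Finset (V × V)) (hA : GoodA E d w A)
    (E' : Finset (V × V)) (hE' : IsOrientation E E')
    (D : Finset (V × V)) (hD : D ⊆ E) (hDf : AdmitsFlow E D d)
    (e : V × V) (he : e ∈ E) :
    ¬ (¬ AEq E d A D (oplus D e) ∧ ¬ AEq E d A D (oplus D (drev e))) ∧
    AEq E d A (phiE E d A E' e D) D ∧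
    (e ∈ phiE E d A E' e D ↔ drev e ∉ phiE E d A E' e D) ∧
    psub (phiE E d A E' e D) e = psub D e := by
  classical
  have hre : drev e ∈ E := (hE_symm e).1 he
  have hne : e.1 ≠ e.2 := hE_ne e he
  have hed : e ≠ drev e := drev_ne hne
  obtain ⟨hmin, huniq⟩ := hA D hD hDf
  have hADD : A D ⊆ D := A_subset hA hD hDf
  -- at most one of e, drev e in A D
  have hone : ¬ (e ∈ A D ∧ drev e ∈ A D) := by
    rintro ⟨h1, h2⟩
    have heD : e ∈ D := hADD h1
    have hreD : drev e ∈ D := hADD h2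
    have hfe : ind (A D) e = 1 := by simp [ind, h1]
    have hfre : ind (A D) (drev e) = 1 := by simp [ind, h2]
    have hgflow : IsFlow E D d
        (fun x => if x = e ∨ x = drev e then ind (A D) x - 1 else ind (A D) x) := by
      refine shift_flow he hre hne hmin.1.2.2 ?_ ?_
      · intro x hx
        by_cases hxe : x = e ∨ x = drev e
        · rw [if_pos hxe]
          rcases hxe with rfl | rfl
          · rw [hfe]; norm_num
          · rw [hfre]; norm_num
        · rw [if_neg hxe]; exact hmin.1.1 x hx
      · intro x hx
        by_cases hxe : x = e ∨ x = drev e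
        · exfalso; rcases hxe with rfl | rfl
          exacts [hx heD, hx hreD]
        · rw [if_neg hxe]; exact hmin.1.2.1 x hx
    have hle := hmin.2 _ hgflow
    rw [cost_shift E w he hre hed (ind (A D)) 1] at hle
    have hw1 := hw e he
    have hw2 := hw (drev e) hre
    linarith
  -- key disjunction
  have key : AEq E d A D (oplus D e) ∨ AEq E d A D (oplus D (drev e)) := by
    by_cases he1 : e ∈ A D
    · exact Or.inl (aeq_oplus_of_mem hA hD hDf he he1 (fun h2 => hone ⟨he1, h2⟩))
    by_cases he2 : drev e ∈ A D
    · exact Or.inr (aeq_oplus_of_mem hA hD hDf hre he2 (by rw [drev_drev]; exact he1))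
    by_contra hcon
    rw [not_or] at hcon
    obtain ⟨hn1, hn2⟩ := hcon
    have hflowgen : ∀ a : V × V, drev a ∉ A D → IsFlow E (oplus D a) d (ind (A D)) := by
      intro a ha
      refine ⟨hmin.1.1, ?_, hmin.1.2.2⟩
      intro x hx
      have hxA : x ∉ A D := by
        intro hxA
        apply hx
        rw [oplus, Finset.mem_sdiff, Finset.mem_insert, Finset.mem_singleton]
        refine ⟨Or.inr (hADD hxA), ?_⟩
        rintro rfl; exact ha hxA
      simp [ind, hxA]
    have hflow1 : IsFlow E (oplus D e) d (ind (A D)) := hflowgen e he2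
    have hflow2 : IsFlow E (oplus D (drev e)) d (ind (A D)) :=
      hflowgen (drev e) (by rw [drev_drev]; exact he1)
    have hadm1 : AdmitsFlow E (oplus D e) d := ⟨_, hflow1⟩
    have hadm2 : AdmitsFlow E (oplus D (drev e)) d := ⟨_, hflow2⟩
    have hsubEgen : ∀ a : V × V, a ∈ E → oplus D a ⊆ E := by
      intro a ha x hx
      rcases Finset.mem_insert.mp (Finset.mem_sdiff.mp hx).1 with rfl | h
      exacts [ha, hD h]
    have hsubE1 := hsubEgen e he
    have hsubE2 := hsubEgen (drev e) hre
    -- strict cost decrease on both sides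
    have hlt : ∀ a : V × V, oplus D a ⊆ E → AdmitsFlow E (oplus D a) d →
        ¬ AEq E d A D (oplus D a) → IsFlow E (oplus D a) d (ind (A D)) →
        flowCost E w (ind (A (oplus D a))) < flowCost E w (ind (A D)) := by
      intro a hsubE hadm hn hfl
      obtain ⟨hmin', huniq'⟩ := hA _ hsubE hadm
      rcases lt_or_ge (flowCost E w (ind (A (oplus D a)))) (flowCost E w (ind (A D))) with h | h
      · exact h
      · exfalso
        apply hn
        have hminD' : IsMinCostFlow E (oplus D a) d w (ind (A D)) := by
          refine ⟨hfl, fun g hg => ?_⟩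
          calc flowCost E w (ind (A D)) ≤ flowCost E w (ind (A (oplus D a))) := h
            _ ≤ flowCost E w g := hmin'.2 g hg
        exact ⟨hDf, hadm, ind_inj (huniq' _ hminD')⟩
    have hlt1 := hlt e hsubE1 hadm1 hn1 hflow1
    have hlt2 := hlt (drev e) hsubE2 hadm2 hn2 hflow2
    -- the cheaper flows must use the new edge
    have huse : ∀ a : V × V, (hs : oplus D a ⊆ E) → (hadm : AdmitsFlow E (oplus D a) d) →
        flowCost E w (ind (A (oplus D a))) < flowCost E w (ind (A D)) → a ∈ A (oplus D a) := by
      intro a hsubE hadm hlt'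
      by_contra hno
      obtain ⟨hmin', _⟩ := hA _ hsubE hadm
      have hsubA : A (oplus D a) ⊆ oplus D a := A_subset hA hsubE hadm
      have hflowD : IsFlow E D d (ind (A (oplus D a))) := by
        refine ⟨hmin'.1.1, ?_, hmin'.1.2.2⟩
        intro x hx
        have hxA : x ∉ A (oplus D a) := by
          intro hxA
          rcases Finset.mem_insert.mp (Finset.mem_sdiff.mp (hsubA hxA)).1 with rfl | h
          exacts [hno hxA, hx h]
        simp [ind, hxA]
      exact absurd (hmin.2 _ hflowD) (not_le.mpr hlt')
    have huse1 : e ∈ A (oplus D e) := huse e hsubE1 hadm1 hlt1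
    have huse2 : drev e ∈ A (oplus D (drev e)) := huse (drev e) hsubE2 hadm2 hlt2
    set f1 : V × V → ℝ := ind (A (oplus D e)) with hf1def
    set f2 : V × V → ℝ := ind (A (oplus D (drev e))) with hf2def
    have hnm1 : drev e ∉ oplus D e := by simp [oplus]
    have hnm2 : e ∉ oplus D (drev e) := by simp [oplus, drev_drev]
    have hsubA1 : A (oplus D e) ⊆ oplus D e := A_subset hA hsubE1 hadm1
    have hsubA2 : A (oplus D (drev e)) ⊆ oplus D (drev e) := A_subset hA hsubE2 hadm2
    have hf1e : f1 e = 1 := by rw [hf1def]; simp [ind, huse1]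
    have hf2re : f2 (drev e) = 1 := by rw [hf2def]; simp [ind, huse2]
    have hf1re : f1 (drev e) = 0 := by
      rw [hf1def]; simp only [ind, ite_eq_right_iff]
      intro hmem; exact absurd (hsubA1 hmem) hnm1
    have hf2e : f2 e = 0 := by
      rw [hf2def]; simp only [ind, ite_eq_right_iff]
      intro hmem; exact absurd (hsubA2 hmem) hnm2
    obtain ⟨hminA1, _⟩ := hA _ hsubE1 hadm1
    obtain ⟨hminA2, _⟩ := hA _ hsubE2 hadm2
    have hb1 := hminA1.1.1
    have hb2 := hminA2.1.1
    -- conservation of the average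
    have hconsh : ∀ u : V,
        ((Finset.univ.filter (fun v : V => (u, v) ∈ E)).sum fun v => (f1 (u, v) + f2 (u, v)) / 2) -
          ((Finset.univ.filter (fun v : V => (v, u) ∈ E)).sum fun v => (f1 (v, u) + f2 (v, u)) / 2)
          = (d u : ℝ) := by
      intro u
      have hc1 := hminA1.1.2.2 u
      have hc2 := hminA2.1.2.2 u
      have hs : ∀ (S : Finset V) (g1 g2 : V → ℝ),
          (∑ v ∈ S, (g1 v + g2 v) / 2) = ((∑ v ∈ S, g1 v) + ∑ v ∈ S, g2 v) / 2 := by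
        intro S g1 g2
        rw [← Finset.sum_add_distrib, Finset.sum_div]
      rw [hs, hs]
      rw [hf1def, hf2def] at *
      linarith
    -- the averaged-and-cancelled flow on D
    have hgflow : IsFlow E D d
        (fun x => if x = e ∨ x = drev e then (f1 x + f2 x) / 2 - 2⁻¹ else (f1 x + f2 x) / 2) := by
      refine shift_flow he hre hne hconsh ?_ ?_
      · intro x hx
        by_cases hxe : x = e ∨ x = drev e
        · rw [if_pos hxe]
          rcases hxe with rfl | rfl
          · rw [hf1e, hf2e]; norm_num
          · rw [hf1re, hf2re]; norm_num
        · rw [if_neg hxe]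
          obtain ⟨hb1l, hb1r⟩ := hb1 x hx
          obtain ⟨hb2l, hb2r⟩ := hb2 x hx
          constructor <;> [linarith; linarith]
      · intro x hx
        by_cases hxe : x = e ∨ x = drev e
        · rw [if_pos hxe]
          rcases hxe with rfl | rfl
          · rw [hf1e, hf2e]; norm_num
          · rw [hf1re, hf2re]; norm_num
        · rw [if_neg hxe]
          rw [not_or] at hxe
          have hx1 : x ∉ A (oplus D e) := by
            intro hmem
            rcases Finset.mem_insert.mp (Finset.mem_sdiff.mp (hsubA1 hmem)).1 with rfl | h
            exacts [hxe.1 rfl, hx h]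
          have hx2 : x ∉ A (oplus D (drev e)) := by
            intro hmem
            rcases Finset.mem_insert.mp (Finset.mem_sdiff.mp (hsubA2 hmem)).1 with rfl | h
            exacts [hxe.2 rfl, hx h]
          have e1 : f1 x = 0 := by rw [hf1def]; simp [ind, hx1]
          have e2 : f2 x = 0 := by rw [hf2def]; simp [ind, hx2]
          rw [e1, e2]; norm_num
    have hle := hmin.2 _ hgflow
    rw [cost_shift E w he hre hed (fun x => (f1 x + f2 x) / 2) 2⁻¹] at hle
    have hcosth : flowCost E w (fun x => (f1 x + f2 x) / 2)
        = (flowCost E w f1 + flowCost E w f2) / 2 := by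
      unfold flowCost
      rw [← Finset.sum_add_distrib, Finset.sum_div]
      exact Finset.sum_congr rfl fun x _ => by ring
    rw [hcosth] at hle
    have hw1 := hw e he
    have hw2 := hw (drev e) hre
    linarith
  -- symmetry of AEq
  have hsym : ∀ X Y : Finset (V × V), AEq E d A X Y → AEq E d A Y X :=
    fun X Y h => ⟨h.2.1, h.1, h.2.2.symm⟩
  have hchi : chi E' e = e ∨ chi E' e = drev e := by
    unfold chi; split_ifs
    exacts [Or.inl rfl, Or.inr rfl]
  have hmain : (phiE E d A E' e D = oplus D e ∧ AEq E d A D (oplus D e)) ∨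
      (phiE E d A E' e D = oplus D (drev e) ∧ AEq E d A D (oplus D (drev e))) := by
    unfold phiE
    split_ifs with h1 h2 h3
    · rcases hchi with hc | hc <;> rw [hc]
      · exact Or.inl ⟨rfl, h1⟩
      · exact Or.inr ⟨rfl, h2⟩
    · rcases hchi with hc | hc <;> rw [hc]
      · exact Or.inr ⟨rfl, h2⟩
      · rw [drev_drev]
        exact Or.inl ⟨rfl, h1⟩
    · exact Or.inl ⟨rfl, h1⟩
    · exact Or.inr ⟨rfl, key.resolve_left h1⟩
  refine ⟨fun h => ?_, ?_, ?_, ?_⟩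
  · rcases key with hk | hk
    exacts [h.1 hk, h.2 hk]
  · rcases hmain with ⟨heq, haeq⟩ | ⟨heq, haeq⟩ <;> rw [heq] <;> exact hsym _ _ haeq
  · rcases hmain with ⟨heq, _⟩ | ⟨heq, _⟩ <;> rw [heq]
    · have h1 : e ∈ oplus D e := by
        rw [oplus, Finset.mem_sdiff, Finset.mem_insert, Finset.mem_singleton]
        exact ⟨Or.inl rfl, hed⟩
      have h2 : drev e ∉ oplus D e := by simp [oplus]
      simp [h1, h2]
    · have h1 : e ∉ oplus D (drev e) := by simp [oplus, drev_drev]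
      have h2 : drev e ∈ oplus D (drev e) := by
        rw [oplus, Finset.mem_sdiff, Finset.mem_insert, Finset.mem_singleton, drev_drev]
        exact ⟨Or.inl rfl, fun hh => hed hh.symm⟩
      simp [h1, h2]
  · rcases hmain with ⟨heq, _⟩ | ⟨heq, _⟩ <;> rw [heq] <;> ext x <;>
      simp only [psub, oplus, Finset.mem_sdiff, Finset.mem_insert, Finset.mem_singleton,
        drev_drev] <;> tauto
end
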